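/- Let q ≥ 2 and n ≥ 1 be integers, ξ = e^{2πi/q}, ω = e^{πi/q}, and η = e^{πi/(2q)}. Then for every u ∈ ℤ_q^n, Σ_{x ∈ ℤ_q^n} ξ^{⟨û,x̂⟩} ω^{Σ_j x̂_j} = η^{n(q−1) − 2 Σ_j û_j} / Π_{j=1}^n sin((2û_j + 1)π/(2q)). -/

import Mathlib

open Finset

/-- `ω = e^{πi/q}`, a primitive `2q`-th root of unity. -/
noncomputable def omg (q : ℕ) : ℂ := Complex.exp ((Real.pi : ℂ) * Complex.I / q)

/-- `ξ = e^{2πi/q}`, a primitive `q`-th root of unity. -/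
noncomputable def xiq (q : ℕ) : ℂ := Complex.exp (2 * (Real.pi : ℂ) * Complex.I / q)

/-- The `2q`-nega-Hadamard transform of `f : ℤ_q^n → ℤ_{2q}` at `u ∈ ℤ_q^n`:
`N_f(u) = q^{-n/2} Σ_x ω^{f(x)} ξ^{⟨x̂,û⟩} ω^{Σ_i x̂_i}`. -/
noncomputable def NHT (q n : ℕ) [NeZero q] (f : (Fin n → ZMod q) → ZMod (2 * q))
    (u : Fin n → ZMod q) : ℂ :=
  (Real.sqrt ((q : ℝ) ^ n) : ℂ)⁻¹ *
    ∑ x : Fin n → ZMod q,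
      omg q ^ (f x).val * xiq q ^ (∑ i, (x i).val * (u i).val) * omg q ^ (∑ i, (x i).val)

/-- The `2q`-nega-crosscorrelation of `f, g : ℤ_q^m → ℤ_{2q}` at `u`:
`C_{f,g}(u) = Σ_x ω^{f(x) − g(x+u)} (−1)^{n_q(x̂,û)}`. -/
noncomputable def negaCC (q m : ℕ) [NeZero q]
    (f g : (Fin m → ZMod q) → ZMod (2 * q)) (u : Fin m → ZMod q) : ℂ :=
  ∑ x : Fin m → ZMod q,
    omg q ^ (f x - g (x + u)).val *
      (-1 : ℂ) ^ (Finset.univ.filter (fun i => q ≤ (x i).val + (u i).val)).card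

/-- `η = e^{πi/(2q)}`, a primitive `4q`-th root of unity. -/
noncomputable def etaq (q : ℕ) : ℂ := Complex.exp ((Real.pi : ℂ) * Complex.I / (2 * q))

lemma coord (q : ℕ) [NeZero q] (hq : 2 ≤ q) (v : ZMod q) :
    ∑ x : ZMod q, xiq q ^ (v.val * x.val) * omg q ^ x.val
      = Complex.exp ((((q : ℤ) - 1 - 2 * (v.val : ℤ)) : ℂ) * ((Real.pi : ℂ) * Complex.I / (2 * q)))
        / (Real.sin ((2 * ((v.val : ℝ)) + 1) * Real.pi / (2 * q)) : ℂ) := by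
  have hq0 : (q : ℂ) ≠ 0 := by exact_mod_cast (NeZero.ne q)
  have hqR : (0 : ℝ) < q := by positivity
  set c : ℂ := ((2 * v.val + 1 : ℕ) : ℂ) * (Real.pi * Complex.I / (2 * q)) with hc
  have hE : Complex.exp c ≠ 0 := Complex.exp_ne_zero c
  -- summand rewrite
  have hsummand : ∀ x : ZMod q, xiq q ^ (v.val * x.val) * omg q ^ x.val
      = (omg q ^ (2 * v.val + 1)) ^ x.val := by
    intro x
    have hxi : xiq q = omg q ^ 2 := by
      rw [xiq, omg, ← Complex.exp_nat_mul]; ring_nf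
    rw [hxi, ← pow_mul, ← pow_mul, ← pow_add]
    ring_nf
  simp_rw [hsummand]
  -- ζ properties
  set ζ : ℂ := omg q ^ (2 * v.val + 1) with hζ
  have hζexp : ζ = Complex.exp c * Complex.exp c := by
    rw [hζ, omg, ← Complex.exp_nat_mul, ← Complex.exp_add, hc]
    congr 1
    push_cast
    field_simp
    ring
  have hζne : ζ ≠ 1 := by
    rw [hζ, omg, ← Complex.exp_nat_mul]
    intro h
    rw [Complex.exp_eq_one_iff] at h
    obtain ⟨k, hk⟩ := h
    have hpiI : (Real.pi : ℂ) * Complex.I ≠ 0 :=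
      mul_ne_zero (by exact_mod_cast Real.pi_ne_zero) Complex.I_ne_zero
    have h2 : ((2 * v.val + 1 : ℕ) : ℂ) = (k : ℂ) * (2 * q) := by
      apply mul_right_cancel₀ hpiI
      push_cast [ZMod.natCast_val]
      field_simp at hk
      push_cast [ZMod.natCast_val] at hk
      linear_combination (↑Real.pi * Complex.I) * hk
    have h3 : (2 * (v.val : ℤ) + 1) = k * (2 * q) := by exact_mod_cast h2
    have heven : Even ((k : ℤ) * (2 * q)) := ⟨k * q, by ring⟩
    have hodd : Odd (2 * (v.val : ℤ) + 1) := ⟨v.val, by ring⟩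
    rw [h3] at hodd
    exact (Int.not_odd_iff_even.mpr heven) hodd
  have hζq : ζ ^ q = -1 := by
    rw [hζ, omg, ← pow_mul, ← Complex.exp_nat_mul]
    have : ((2 * v.val + 1) * q : ℕ) * ((Real.pi : ℂ) * Complex.I / q)
        = ((2 * v.val + 1 : ℕ) : ℂ) * (Real.pi * Complex.I) := by
      push_cast; field_simp
    rw [this, Complex.exp_nat_mul, Complex.exp_pi_mul_I, Odd.neg_one_pow ⟨v.val, by ring⟩]
  -- geometric sum
  have hsum : ∑ x : ZMod q, ζ ^ x.val = -2 / (ζ - 1) := by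
    obtain ⟨m, rfl⟩ : ∃ m, q = m + 1 := ⟨q - 1, by omega⟩
    have h1 : ∑ x : ZMod (m+1), ζ ^ x.val = ∑ k ∈ Finset.range (m+1), ζ ^ k :=
      Fin.sum_univ_eq_sum_range (fun k => ζ ^ k) (m+1)
    rw [h1, geom_sum_eq hζne, hζq]
    norm_num
  rw [hsum]
  -- nonzeroness of sin
  have hvlt : v.val < q := ZMod.val_lt v
  have hθpos : 0 < (2 * (v.val : ℝ) + 1) * Real.pi / (2 * q) := by positivity
  have hθlt : (2 * (v.val : ℝ) + 1) * Real.pi / (2 * q) < Real.pi := by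
    rw [div_lt_iff₀ (by positivity)]
    have h1 : (2 * (v.val : ℝ) + 1) < 2 * q := by
      have : (v.val : ℝ) + 1 ≤ q := by exact_mod_cast hvlt
      linarith
    nlinarith [Real.pi_pos]
  have hs : Real.sin ((2 * (v.val : ℝ) + 1) * Real.pi / (2 * q)) ≠ 0 :=
    ne_of_gt (Real.sin_pos_of_pos_of_lt_pi hθpos hθlt)
  have hsC : (Real.sin ((2 * (v.val : ℝ) + 1) * Real.pi / (2 * q)) : ℂ) ≠ 0 := by
    exact_mod_cast hs
  have hζ1 : ζ - 1 ≠ 0 := sub_ne_zero.mpr hζne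
  rw [div_eq_div_iff hζ1 hsC]
  -- express everything in terms of exp c
  have hsin : (Real.sin ((2 * (v.val : ℝ) + 1) * Real.pi / (2 * q)) : ℂ)
      = (Complex.exp (-c) - Complex.exp c) * Complex.I / 2 := by
    rw [Complex.ofReal_sin, Complex.sin]
    congr 3
    · congr 1; rw [hc]; push_cast; field_simp
    · rw [hc]; push_cast; field_simp
  have hexp : Complex.exp ((((q : ℤ) - 1 - 2 * (v.val : ℤ)) : ℂ) * (Real.pi * Complex.I / (2 * q)))
      = Complex.I * Complex.exp (-c) := by
    have : (((q : ℤ) - 1 - 2 * (v.val : ℤ)) : ℂ) * (Real.pi * Complex.I / (2 * q))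
        = Real.pi / 2 * Complex.I + (-c) := by
      rw [hc]; push_cast; field_simp; ring
    rw [this, Complex.exp_add]
    congr 1
    simp [Complex.exp_mul_I]
  rw [hsin, hexp, hζexp, Complex.exp_neg]
  field_simp
  ring

/-- For every `u ∈ ℤ_q^n`,
`Σ_{x ∈ ℤ_q^n} ξ^{⟨û,x̂⟩} ω^{Σ_j x̂_j} = η^{n(q−1) − 2Σ_j û_j} / Π_j sin((2û_j+1)π/(2q))`. -/
theorem nht_of_zero (q n : ℕ) [NeZero q] (hq : 2 ≤ q) (hn : 1 ≤ n) (u : Fin n → ZMod q) :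
    ∑ x : Fin n → ZMod q,
        xiq q ^ (∑ i, (u i).val * (x i).val) * omg q ^ (∑ i, (x i).val)
      = etaq q ^ ((n : ℤ) * ((q : ℤ) - 1) - 2 * ∑ j, ((u j).val : ℤ)) /
          ∏ j, (Real.sin ((2 * ((u j).val : ℝ) + 1) * Real.pi / (2 * q)) : ℂ) := by
  have hstep : ∀ x : Fin n → ZMod q,
      xiq q ^ (∑ i, (u i).val * (x i).val) * omg q ^ (∑ i, (x i).val)
        = ∏ i, (xiq q ^ ((u i).val * (x i).val) * omg q ^ (x i).val) := by
    intro x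
    rw [← Finset.prod_pow_eq_pow_sum, ← Finset.prod_pow_eq_pow_sum, ← Finset.prod_mul_distrib]
  simp_rw [hstep]
  rw [show (univ : Finset (Fin n → ZMod q)) = Fintype.piFinset (fun _ => univ) from
    (Fintype.piFinset_univ).symm, ← Finset.prod_univ_sum (fun _ => (univ : Finset (ZMod q)))
    (fun i (y : ZMod q) => xiq q ^ ((u i).val * y.val) * omg q ^ y.val)]
  have hco : ∀ i : Fin n, ∑ y : ZMod q, xiq q ^ ((u i).val * y.val) * omg q ^ y.val
      = Complex.exp ((((q : ℤ) - 1 - 2 * ((u i).val : ℤ)) : ℂ) * ((Real.pi : ℂ) * Complex.I / (2 * q)))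
        / (Real.sin ((2 * (((u i).val : ℝ)) + 1) * Real.pi / (2 * q)) : ℂ) := fun i => coord q hq (u i)
  simp_rw [hco]
  rw [Finset.prod_div_distrib, ← Complex.exp_sum]
  congr 1
  rw [etaq, ← Complex.exp_int_mul]
  congr 1
  rw [← Finset.sum_mul]
  congr 1
  push_cast
  rw [Finset.sum_sub_distrib, Finset.sum_sub_distrib]
  simp [Finset.mul_sum, mul_comm]
  ring
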